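/- Let A₁, ..., A_n be m×m real symmetric matrices. The system x₁A₁ + ⋯ + x_nA_n ≻ 0 has no solution (x₁,...,x_n) ∈ ℝⁿ if and only if there exists a nonzero symmetric positive semi-definite m×m matrix Y with ⟨A_i, Y⟩ = 0 for all i ∈ [n], where ⟨A, Y⟩ = tr(AY). -/

import Mathlib

open Matrix Finset

attribute [local instance] Matrix.normedAddCommGroup Matrix.normedSpace

namespace SDPFarkas

variable {m : ℕ}

lemma isHermitian_of_isSymm' {M : Matrix (Fin m) (Fin m) ℝ} (h : M.IsSymm) :
    M.IsHermitian := by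
  have : Mᴴ = Mᵀ := by ext i j; simp [conjTranspose_apply]
  unfold Matrix.IsHermitian
  rw [this]; exact h

lemma qf_smul (N : Matrix (Fin m) (Fin m) ℝ) (b : ℝ) (z : Fin m → ℝ) :
    (b • z) ⬝ᵥ N *ᵥ (b • z) = b ^ 2 * (z ⬝ᵥ N *ᵥ z) := by
  simp only [dotProduct, Matrix.mulVec, Pi.smul_apply, smul_eq_mul, Finset.mul_sum]
  refine Finset.sum_congr rfl fun i _ => Finset.sum_congr rfl fun j _ => ?_
  ring

lemma qf_bound (N : Matrix (Fin m) (Fin m) ℝ) (z : Fin m → ℝ) (hz : ∀ i, |z i| ≤ 1) :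
    |z ⬝ᵥ N *ᵥ z| ≤ (m : ℝ) ^ 2 * ‖N‖ := by
  have hN : ∀ i j, |N i j| ≤ ‖N‖ := fun i j =>
    le_trans (norm_le_pi_norm (N i) j) (norm_le_pi_norm N i)
  have hNn : (0:ℝ) ≤ ‖N‖ := norm_nonneg N
  simp only [dotProduct, Matrix.mulVec]
  calc |∑ i, z i * ∑ j, N i j * z j| ≤ ∑ i, |z i * ∑ j, N i j * z j| :=
        Finset.abs_sum_le_sum_abs _ _
    _ ≤ ∑ _i : Fin m, (m : ℝ) * ‖N‖ := by
        refine Finset.sum_le_sum fun i _ => ?_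
        rw [abs_mul]
        calc |z i| * |∑ j, N i j * z j| ≤ 1 * |∑ j, N i j * z j| := by
              apply mul_le_mul_of_nonneg_right (hz i) (abs_nonneg _)
          _ = |∑ j, N i j * z j| := one_mul _
          _ ≤ ∑ j, |N i j * z j| := Finset.abs_sum_le_sum_abs _ _
          _ ≤ ∑ _j : Fin m, ‖N‖ := by
              refine Finset.sum_le_sum fun j _ => ?_
              rw [abs_mul]
              calc |N i j| * |z j| ≤ ‖N‖ * 1 :=
                    mul_le_mul (hN i j) (hz j) (abs_nonneg _) hNn
                _ = ‖N‖ := mul_one _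
          _ = (m : ℝ) * ‖N‖ := by simp [Finset.sum_const, mul_comm]
    _ = (m : ℝ) ^ 2 * ‖N‖ := by simp [Finset.sum_const]; ring

lemma isOpen_posdefset (hm : 0 < m) :
    IsOpen {M : Matrix (Fin m) (Fin m) ℝ | ∀ x : Fin m → ℝ, x ≠ 0 → 0 < x ⬝ᵥ M *ᵥ x} := by
  haveI : Nonempty (Fin m) := Fin.pos_iff_nonempty.mp hm
  refine Metric.isOpen_iff.mpr ?_
  intro M₀ hM₀
  have hcont : Continuous fun x : Fin m → ℝ => x ⬝ᵥ M₀ *ᵥ x := by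
    simp only [dotProduct, Matrix.mulVec]
    exact continuous_finset_sum _ fun i _ => (continuous_apply i).mul
      (continuous_finset_sum _ fun j _ => continuous_const.mul (continuous_apply j))
  have hne : (Metric.sphere (0 : Fin m → ℝ) 1).Nonempty := by
    refine ⟨fun _ => 1, ?_⟩
    simp [Metric.mem_sphere, dist_zero_right, pi_norm_const]
  obtain ⟨y, hy, hmin⟩ := (isCompact_sphere (0 : Fin m → ℝ) 1).exists_isMinOn hne
    hcont.continuousOn
  have hynorm : ‖y‖ = 1 := by simpa [dist_zero_right] using hy
  have hy0 : y ≠ 0 := by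
    intro h; rw [h] at hynorm; simp at hynorm
  set c := y ⬝ᵥ M₀ *ᵥ y with hc
  have hcpos : 0 < c := hM₀ y hy0
  set ε := c / ((m : ℝ) ^ 2 + 1) with hε
  have hεpos : 0 < ε := by positivity
  refine ⟨ε, hεpos, fun M hM => ?_⟩
  intro x hx
  have ha : 0 < ‖x‖ := norm_pos_iff.mpr hx
  set y' := ‖x‖⁻¹ • x with hy'
  have hy'norm : ‖y'‖ = 1 := by
    rw [hy', norm_smul, norm_inv, norm_norm, inv_mul_cancel₀ (ne_of_gt ha)]
  have hxy : x = ‖x‖ • y' := by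
    rw [hy', smul_smul, mul_inv_cancel₀ (ne_of_gt ha), one_smul]
  have hsplit : y' ⬝ᵥ (M - M₀) *ᵥ y' = y' ⬝ᵥ M *ᵥ y' - y' ⬝ᵥ M₀ *ᵥ y' := by
    simp [Matrix.sub_mulVec, dotProduct_sub]
  have hb : |y' ⬝ᵥ (M - M₀) *ᵥ y'| ≤ (m : ℝ) ^ 2 * ‖M - M₀‖ :=
    qf_bound _ _ fun i => by
      calc |y' i| ≤ ‖y'‖ := norm_le_pi_norm y' i
        _ = 1 := hy'norm
  have hdist : ‖M - M₀‖ < ε := by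
    rw [← dist_eq_norm]; exact hM
  have hmin' : c ≤ y' ⬝ᵥ M₀ *ᵥ y' := hmin (by simp [Metric.mem_sphere, dist_zero_right, hy'norm])
  have hcore : 0 < y' ⬝ᵥ M *ᵥ y' := by
    have h1 : (m : ℝ) ^ 2 * ‖M - M₀‖ ≤ (m : ℝ) ^ 2 * ε := by
      apply mul_le_mul_of_nonneg_left (le_of_lt hdist) (by positivity)
    have h2 : (m : ℝ) ^ 2 * ε < c := by
      have : ε * ((m : ℝ) ^ 2 + 1) = c := by rw [hε]; field_simp
      nlinarith [hεpos]
    have h3 := (abs_le.mp hb).1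
    rw [hsplit] at h3
    linarith
  calc (0:ℝ) < ‖x‖ ^ 2 * (y' ⬝ᵥ M *ᵥ y') := by positivity
    _ = x ⬝ᵥ M *ᵥ x := by rw [← qf_smul, ← hxy]

open scoped MatrixOrder in
lemma tracePos {M Y : Matrix (Fin m) (Fin m) ℝ} (hM : M.PosDef)
    (hY : Y.PosSemidef) (hY0 : Y ≠ 0) : 0 < (M * Y).trace := by
  set S := CFC.sqrt Y with hS
  have hSS : S * S = Y := CFC.sqrt_mul_sqrt_self Y hY.nonneg
  have hSsymm : Sᵀ = S := (CFC.sqrt_nonneg Y).posSemidef.isHermitian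
  have htr : (M * Y).trace = (S * M * S).trace := by
    rw [← hSS, ← mul_assoc, trace_mul_cycle]
  have hdiag : ∀ i, (S * M * S) i i = (fun k => S k i) ⬝ᵥ M *ᵥ (fun k => S k i) := by
    intro i
    have hsym : ∀ a b, S a b = S b a := fun a b => congrFun (congrFun hSsymm.symm a) b
    simp only [Matrix.mul_apply, dotProduct, Matrix.mulVec, Finset.sum_mul,
      Finset.mul_sum]
    rw [Finset.sum_comm]
    refine Finset.sum_congr rfl fun j _ => Finset.sum_congr rfl fun k _ => ?_
    rw [hsym i j]; ring
  have hnz : ∃ i, (fun k => S k i) ≠ (0 : Fin m → ℝ) := by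
    by_contra h
    push_neg at h
    apply hY0
    rw [← hSS]
    have : S = 0 := by
      ext a b
      exact congrFun (h b) a
    simp [this]
  obtain ⟨i, hi⟩ := hnz
  rw [htr, Matrix.trace]
  apply Finset.sum_pos'
  · intro j _
    rw [Matrix.diag, hdiag j]
    simpa using hM.posSemidef.dotProduct_mulVec_nonneg (fun k => S k j)
  · exact ⟨i, Finset.mem_univ i, by
      rw [Matrix.diag, hdiag i]
      simpa using hM.dotProduct_mulVec_pos hi⟩

lemma forward {n : ℕ} (A : Fin n → Matrix (Fin m) (Fin m) ℝ)
    (hA : ∀ i, (A i).IsSymm) (hm : 0 < m)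
    (h : ¬ ∃ x : Fin n → ℝ, (∑ i, x i • A i).PosDef) :
    ∃ Y : Matrix (Fin m) (Fin m) ℝ, Y ≠ 0 ∧ Y.PosSemidef ∧
        ∀ i, (A i * Y).trace = 0 := by
  haveI : Nonempty (Fin m) := Fin.pos_iff_nonempty.mp hm
  set s : Set (Matrix (Fin m) (Fin m) ℝ) :=
    {M | ∀ x : Fin m → ℝ, x ≠ 0 → 0 < x ⬝ᵥ M *ᵥ x} with hs
  set L := Submodule.span ℝ (Set.range A) with hL
  have hsconv : Convex ℝ s := by
    intro M₁ h1 M₂ h2 a b ha hb hab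
    intro x hx
    have e : x ⬝ᵥ (a • M₁ + b • M₂) *ᵥ x
        = a * (x ⬝ᵥ M₁ *ᵥ x) + b * (x ⬝ᵥ M₂ *ᵥ x) := by
      simp [Matrix.add_mulVec, Matrix.smul_mulVec, dotProduct_add,
        dotProduct_smul, smul_eq_mul]
    have q1 := h1 x hx
    have q2 := h2 x hx
    rcases eq_or_lt_of_le ha with h0 | hapos
    · have hb1 : b = 1 := by linarith
      rw [e, ← h0, hb1]
      simpa using q2
    · rw [e]
      nlinarith [mul_pos hapos q1, mul_nonneg hb q2.le]
  have hdisj : Disjoint s (L : Set (Matrix (Fin m) (Fin m) ℝ)) := by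
    rw [Set.disjoint_left]
    intro M hMs hMt
    rw [SetLike.mem_coe, hL, Submodule.mem_span_range_iff_exists_fun] at hMt
    obtain ⟨c, hc⟩ := hMt
    apply h
    refine ⟨c, ?_⟩
    rw [hc]
    have hsymm : M.IsSymm := by
      rw [← hc]
      unfold Matrix.IsSymm
      rw [Matrix.transpose_sum]
      refine Finset.sum_congr rfl fun i _ => ?_
      rw [Matrix.transpose_smul, hA i]
    exact PosDef.of_dotProduct_mulVec_pos (isHermitian_of_isSymm' hsymm) fun x hx => by simpa using hMs x hx
  obtain ⟨f, u, hfs, hft⟩ :=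
    geometric_hahn_banach_open hsconv (isOpen_posdefset hm) L.convex hdisj
  have hf0 : ∀ b ∈ L, f b = 0 := by
    intro b hb
    by_contra hfb
    have h1 : u ≤ f (((u - 1) / f b) • b) := hft _ (L.smul_mem _ hb)
    rw [_root_.map_smul, smul_eq_mul, div_mul_cancel₀ _ hfb] at h1
    linarith
  set g : Matrix (Fin m) (Fin m) ℝ →L[ℝ] ℝ := -f with hg
  have hu0 : u ≤ 0 := by simpa using hft 0 L.zero_mem
  have hgs : ∀ M ∈ s, 0 < g M := by
    intro M hM
    have := hfs M hM
    simp only [hg, ContinuousLinearMap.neg_apply]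
    linarith
  have hgL : ∀ b ∈ L, g b = 0 := by
    intro b hb
    simp [hg, hf0 b hb]
  set Y : Matrix (Fin m) (Fin m) ℝ := Matrix.of fun i j =>
    (g (Matrix.single i j 1) + g (Matrix.single j i 1)) / 2 with hY
  have hYsymm : Y.IsSymm := by
    unfold Matrix.IsSymm
    ext i j
    simp only [Matrix.transpose_apply, hY, Matrix.of_apply]
    ring
  -- representation: for symmetric M, trace (M * Y) = g M
  have hrep : ∀ M : Matrix (Fin m) (Fin m) ℝ, M.IsSymm → (M * Y).trace = g M := by
    intro M hM
    have hMsym : ∀ i j, M i j = M j i := fun i j => by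
      have h' := congrFun (congrFun hM j) i
      simpa [Matrix.transpose_apply] using h'
    have hgM : g M = ∑ i, ∑ j, M i j * g (Matrix.single i j 1) := by
      nth_rewrite 1 [matrix_eq_sum_single M]
      rw [map_sum]
      refine Finset.sum_congr rfl fun i _ => ?_
      rw [map_sum]
      refine Finset.sum_congr rfl fun j _ => ?_
      have e : Matrix.single i j (M i j) = (M i j) • Matrix.single i j 1 := by
        rw [Matrix.smul_single, smul_eq_mul, mul_one]
      rw [e, _root_.map_smul, smul_eq_mul]
    have htr : (M * Y).trace = ∑ i, ∑ j, M i j * Y j i := by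
      rw [Matrix.trace]
      simp only [Matrix.diag, Matrix.mul_apply]
    have hsw : ∑ i, ∑ j, M i j * g (Matrix.single j i 1)
        = ∑ i, ∑ j, M i j * g (Matrix.single i j 1) := by
      rw [Finset.sum_comm]
      refine Finset.sum_congr rfl fun i _ => Finset.sum_congr rfl fun j _ => ?_
      rw [hMsym i j]
    rw [htr, hgM]
    calc ∑ i, ∑ j, M i j * Y j i
        = ∑ i, ∑ j, (M i j * g (Matrix.single j i 1)
            + M i j * g (Matrix.single i j 1)) / 2 := by
          refine Finset.sum_congr rfl fun i _ => Finset.sum_congr rfl fun j _ => ?_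
          simp only [hY, Matrix.of_apply]
          ring
      _ = ((∑ i, ∑ j, M i j * g (Matrix.single j i 1))
            + ∑ i, ∑ j, M i j * g (Matrix.single i j 1)) / 2 := by
          simp [Finset.sum_add_distrib, ← Finset.sum_div]
      _ = ∑ i, ∑ j, M i j * g (Matrix.single i j 1) := by
          rw [hsw]; ring
  -- 1 ∈ s
  have hone : (1 : Matrix (Fin m) (Fin m) ℝ) ∈ s := by
    intro x hx
    rw [Matrix.one_mulVec]
    have h0 : x ⬝ᵥ x ≠ 0 := by
      rwa [ne_eq, dotProduct_self_eq_zero]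
    have h1 : 0 ≤ x ⬝ᵥ x := Finset.sum_nonneg fun i _ => mul_self_nonneg _
    exact lt_of_le_of_ne h1 (Ne.symm h0)
  have hg1 : 0 < g 1 := hgs 1 hone
  have hYtr : Y.trace = g 1 := by
    have := hrep 1 Matrix.isSymm_one
    rwa [one_mul] at this
  refine ⟨Y, ?_, PosSemidef.of_dotProduct_mulVec_nonneg ?_ ?_, ?_⟩
  · intro h0
    rw [h0] at hYtr
    simp at hYtr
    rw [← hYtr] at hg1
    exact lt_irrefl 0 hg1
  · -- IsHermitian
    exact isHermitian_of_isSymm' hYsymm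
  · -- nonneg quadratic form
    intro x
    have hQ : star x ⬝ᵥ Y *ᵥ x = (vecMulVec x x * Y).trace := by
      rw [Matrix.trace]
      simp only [Matrix.diag, Matrix.mul_apply, Matrix.vecMulVec_apply,
        dotProduct, Matrix.mulVec, star_trivial, Finset.mul_sum]
      rw [Finset.sum_comm]
      refine Finset.sum_congr rfl fun i _ => Finset.sum_congr rfl fun j _ => ?_
      ring
    have hvsym : (vecMulVec x x).IsSymm := by
      unfold Matrix.IsSymm
      ext i j
      simp [Matrix.vecMulVec_apply, mul_comm]
    rw [hQ, hrep _ hvsym]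
    -- show 0 ≤ g (vecMulVec x x)
    by_contra hneg
    push_neg at hneg
    set εv := -g (vecMulVec x x) / (2 * g 1) with hεv
    have hεvpos : 0 < εv := by
      apply div_pos (by linarith) (by linarith)
    have hmem : vecMulVec x x + εv • 1 ∈ s := by
      intro z hz
      have e : z ⬝ᵥ (vecMulVec x x + εv • 1) *ᵥ z
          = (x ⬝ᵥ z) * (x ⬝ᵥ z) + εv * (z ⬝ᵥ z) := by
        rw [Matrix.add_mulVec, dotProduct_add, Matrix.smul_mulVec,
          dotProduct_smul, Matrix.one_mulVec, smul_eq_mul]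
        congr 1
        simp only [dotProduct, Matrix.mulVec, Matrix.vecMulVec_apply,
          Finset.mul_sum, Finset.sum_mul]
        refine Finset.sum_congr rfl fun i _ => Finset.sum_congr rfl fun j _ => ?_
        ring
      rw [e]
      have hz2 : 0 < z ⬝ᵥ z := by
        have h0 : z ⬝ᵥ z ≠ 0 := by rwa [ne_eq, dotProduct_self_eq_zero]
        exact lt_of_le_of_ne (Finset.sum_nonneg fun i _ => mul_self_nonneg _) (Ne.symm h0)
      nlinarith [mul_self_nonneg (x ⬝ᵥ z)]
    have hpos := hgs _ hmem
    rw [map_add, _root_.map_smul, smul_eq_mul] at hpos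
    rw [hεv] at hpos
    have hg1' : g 1 ≠ 0 := ne_of_gt hg1
    have hgl : -g (vecMulVec x x) / (2 * g 1) * g 1 = -g (vecMulVec x x) / 2 := by
      field_simp
    rw [hgl] at hpos
    linarith
  · intro i
    rw [hrep _ (hA i)]
    exact hgL _ (Submodule.subset_span ⟨i, rfl⟩)


lemma backward {n : ℕ} (A : Fin n → Matrix (Fin m) (Fin m) ℝ)
    (Y : Matrix (Fin m) (Fin m) ℝ) (hY0 : Y ≠ 0) (hYpsd : Y.PosSemidef)
    (htr : ∀ i, (A i * Y).trace = 0) :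
    ¬ ∃ x : Fin n → ℝ, (∑ i, x i • A i).PosDef := by
  rintro ⟨x, hx⟩
  have h1 : (∑ i, x i • A i) * Y = ∑ i, x i • (A i * Y) := by
    rw [Finset.sum_mul]
    exact Finset.sum_congr rfl fun i _ => smul_mul_assoc _ _ _
  have h2 : ((∑ i, x i • A i) * Y).trace = 0 := by
    rw [h1, trace_sum]
    simp [Matrix.trace_smul, htr, smul_eq_mul]
  have := tracePos hx hYpsd hY0
  rw [h2] at this
  exact lt_irrefl 0 this

end SDPFarkas

/-- Farkas' lemma for semi-definite programming: the system
`x₁ A₁ + ⋯ + xₙ Aₙ ≻ 0` has no solution iff there is a nonzero positive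
semi-definite `Y` with `⟨Aᵢ, Y⟩ = 0` for all `i`. -/
theorem stmt9 {m n : ℕ} (A : Fin n → Matrix (Fin m) (Fin m) ℝ)
    (hA : ∀ i, (A i).IsSymm) :
    (¬ ∃ x : Fin n → ℝ, (∑ i, x i • A i).PosDef) ↔
      ∃ Y : Matrix (Fin m) (Fin m) ℝ, Y ≠ 0 ∧ Y.PosSemidef ∧
        ∀ i, (A i * Y).trace = 0 := by
  rcases Nat.eq_zero_or_pos m with hm | hm
  · subst hm
    constructor
    · intro h
      exfalso
      apply h
      refine ⟨0, Matrix.PosDef.of_dotProduct_mulVec_pos ?_ fun x hx => absurd (funext fun i => i.elim0) hx⟩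
      ext i j
      exact i.elim0
    · rintro ⟨Y, hY0, -, -⟩ -
      exact hY0 (by ext i j; exact i.elim0)
  · constructor
    · exact SDPFarkas.forward A hA hm
    · rintro ⟨Y, hY0, hYpsd, htr⟩
      exact SDPFarkas.backward A Y hY0 hYpsd htr
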